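/- Define F₀(i) = 1 and F_n(i) = Σ_{k=0}^{⌊n/2⌋} C(⌊n/2⌋, k)·f_i^{⌊n/2⌋−k}·c_i^k·F_k(i+1), where for each level i, f_i, c_i ≥ 0 and f_i + c_i ≤ 1. Then 0 ≤ F_n(i) ≤ 1 for all n ≥ 0 and all i, and F_n(i) is non-increasing in n at fixed i. -/

import Mathlib

/-- Failure probability of the recycling protocol: `Frec f c n i` is the
probability of failing to generate a singlet starting from `n` states at
recursion level `i`, where `f i` and `c i` are the complete-failure and
PMS-retention probabilities of a single pairing at level `i`. -/
def Frec (f c : ℕ → ℝ) : ℕ → ℕ → ℝ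
  | 0, _ => 1
  | (n + 1), i =>
      ∑ k ∈ (Finset.range ((n + 1) / 2 + 1)).attach,
        (Nat.choose ((n + 1) / 2) k.1 : ℝ) * f i ^ ((n + 1) / 2 - k.1) * c i ^ k.1 *
          Frec f c k.1 (i + 1)
  termination_by n _ => n
  decreasing_by
    have hk := Finset.mem_range.mp k.2
    omega

namespace RecAux

/-- Binomial-weighted sum. -/
def S (x y : ℝ) (g : ℕ → ℝ) (m : ℕ) : ℝ :=
  ∑ k ∈ Finset.range (m + 1), (m.choose k : ℝ) * x ^ (m - k) * y ^ k * g k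

lemma S_congr {x y : ℝ} {g h : ℕ → ℝ} {m : ℕ} (hgh : ∀ k ≤ m, g k = h k) :
    S x y g m = S x y h m := by
  refine Finset.sum_congr rfl fun k hk => ?_
  rw [hgh k (Nat.lt_succ_iff.mp (Finset.mem_range.mp hk))]

lemma S_nonneg {x y : ℝ} (hx : 0 ≤ x) (hy : 0 ≤ y) {g : ℕ → ℝ}
    (hg : ∀ k, 0 ≤ g k) (m : ℕ) : 0 ≤ S x y g m :=
  Finset.sum_nonneg fun k _ =>
    mul_nonneg (mul_nonneg (mul_nonneg (by positivity) (pow_nonneg hx _)) (pow_nonneg hy _)) (hg k)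

lemma S_le_S {x y : ℝ} (hx : 0 ≤ x) (hy : 0 ≤ y) {g h : ℕ → ℝ}
    (hgh : ∀ k, g k ≤ h k) (m : ℕ) : S x y g m ≤ S x y h m :=
  Finset.sum_le_sum fun k _ =>
    mul_le_mul_of_nonneg_left (hgh k)
      (mul_nonneg (mul_nonneg (by positivity) (pow_nonneg hx _)) (pow_nonneg hy _))

lemma S_le_pow {x y : ℝ} (hx : 0 ≤ x) (hy : 0 ≤ y) {g : ℕ → ℝ}
    (hg : ∀ k, g k ≤ 1) (m : ℕ) : S x y g m ≤ (x + y) ^ m := by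
  have h1 : S x y g m ≤ S x y (fun _ => 1) m := S_le_S hx hy hg m
  refine h1.trans_eq ?_
  rw [S, add_comm x y, add_pow]
  refine Finset.sum_congr rfl fun k hk => ?_
  ring

lemma S_succ (x y : ℝ) (g : ℕ → ℝ) (m : ℕ) :
    S x y g (m + 1) = x * S x y g m + y * S x y (fun k => g (k + 1)) m := by
  have hx : x * S x y g m
      = ∑ k ∈ Finset.range m, (m.choose (k+1) : ℝ) * x ^ (m - k) * y ^ (k+1) * g (k+1)
        + x ^ (m + 1) * g 0 := by
    rw [S, Finset.mul_sum, Finset.sum_range_succ']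
    congr 1
    · refine Finset.sum_congr rfl fun k hk => ?_
      have hk' : k < m := Finset.mem_range.mp hk
      have : m - k = (m - (k + 1)) + 1 := by omega
      rw [this]
      ring
    · simp [pow_succ]; ring
  have hy : y * S x y (fun k => g (k + 1)) m
      = ∑ k ∈ Finset.range (m+1), (m.choose k : ℝ) * x ^ (m - k) * y ^ (k+1) * g (k+1) := by
    rw [S, Finset.mul_sum]
    refine Finset.sum_congr rfl fun k hk => ?_
    ring
  rw [hx, hy, S, Finset.sum_range_succ']
  have hterm : ∀ k ∈ Finset.range (m + 1),
      ((m+1).choose (k+1) : ℝ) * x ^ (m + 1 - (k+1)) * y ^ (k+1) * g (k+1)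
      = (m.choose k : ℝ) * x ^ (m - k) * y ^ (k+1) * g (k+1)
        + (m.choose (k+1) : ℝ) * x ^ (m - k) * y ^ (k+1) * g (k+1) := by
    intro k hk
    have : m + 1 - (k + 1) = m - k := by omega
    rw [this, Nat.choose_succ_succ]
    push_cast
    ring
  rw [Finset.sum_congr rfl hterm, Finset.sum_add_distrib]
  have hlast : ∑ k ∈ Finset.range (m+1), (m.choose (k+1) : ℝ) * x ^ (m - k) * y ^ (k+1) * g (k+1)
      = ∑ k ∈ Finset.range m, (m.choose (k+1) : ℝ) * x ^ (m - k) * y ^ (k+1) * g (k+1) := by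
    rw [Finset.sum_range_succ, Nat.choose_succ_self]
    simp
  rw [hlast]
  simp [Nat.choose_zero_right]
  ring

lemma S_step {x y : ℝ} (hx : 0 ≤ x) (hy : 0 ≤ y) (hxy : x + y ≤ 1) {g : ℕ → ℝ}
    (hg0 : ∀ k, 0 ≤ g k) (hga : ∀ k, g (k + 1) ≤ g k) (m : ℕ) :
    S x y g (m + 1) ≤ S x y g m := by
  rw [S_succ]
  have h1 : S x y (fun k => g (k + 1)) m ≤ S x y g m := S_le_S hx hy hga m
  have h0 : 0 ≤ S x y g m := S_nonneg hx hy hg0 m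
  nlinarith

lemma S_anti {x y : ℝ} (hx : 0 ≤ x) (hy : 0 ≤ y) (hxy : x + y ≤ 1) {g : ℕ → ℝ}
    (hg0 : ∀ k, 0 ≤ g k) (hga : ∀ k, g (k + 1) ≤ g k) {a b : ℕ} (hab : a ≤ b) :
    S x y g b ≤ S x y g a := by
  induction b with
  | zero => simp [Nat.le_zero.mp hab]
  | succ b ih =>
    rcases Nat.lt_or_ge a (b + 1) with h | h
    · exact (S_step hx hy hxy hg0 hga b).trans (ih (by omega))
    · have : a = b + 1 := by omega
      simp [this]

end RecAux

open RecAux in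
lemma Frec_succ (f c : ℕ → ℝ) (n i : ℕ) :
    Frec f c (n + 1) i = S (f i) (c i) (fun k => Frec f c k (i + 1)) ((n + 1) / 2) := by
  rw [Frec, S]
  exact Finset.sum_attach (Finset.range ((n + 1) / 2 + 1)) fun k =>
    (Nat.choose ((n + 1) / 2) k : ℝ) * f i ^ ((n + 1) / 2 - k) * c i ^ k * Frec f c k (i + 1)

open RecAux in
theorem recycling_failure_bounds (f c : ℕ → ℝ)
    (hf : ∀ i, 0 ≤ f i) (hc : ∀ i, 0 ≤ c i) (hfc : ∀ i, f i + c i ≤ 1) :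
    (∀ n i, 0 ≤ Frec f c n i ∧ Frec f c n i ≤ 1) ∧
    (∀ m n i, m ≤ n → Frec f c n i ≤ Frec f c m i) := by
  have key : ∀ n i, 0 ≤ Frec f c n i ∧ Frec f c n i ≤ 1 := by
    intro n
    induction n using Nat.strong_induction_on with
    | _ n ih =>
      intro i
      match n with
      | 0 => simp [Frec]
      | n + 1 =>
        set M := (n + 1) / 2 with hM
        have hMn : M ≤ n := by omega
        set g : ℕ → ℝ := fun k => Frec f c (min k M) (i + 1) with hg
        have hcong : Frec f c (n + 1) i = S (f i) (c i) g M := by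
          rw [Frec_succ]
          exact S_congr fun k hk => by rw [hg]; simp [Nat.min_eq_left (show k ≤ M from hk)]
        have hg0 : ∀ k, 0 ≤ g k := fun k =>
          (ih (min k M) (by omega) (i + 1)).1
        have hg1 : ∀ k, g k ≤ 1 := fun k =>
          (ih (min k M) (by omega) (i + 1)).2
        constructor
        · rw [hcong]; exact S_nonneg (hf i) (hc i) hg0 M
        · rw [hcong]
          refine (S_le_pow (hf i) (hc i) hg1 M).trans ?_
          exact pow_le_one₀ (by have := hf i; have := hc i; linarith) (hfc i)
  refine ⟨key, ?_⟩
  have anti : ∀ n i m, m ≤ n → Frec f c n i ≤ Frec f c m i := by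
    intro n
    induction n using Nat.strong_induction_on with
    | _ n ih =>
      intro i m hmn
      match n, m with
      | n, 0 =>
        simp only [Frec]
        exact (key n i).2
      | n + 1, m + 1 =>
        set M := (n + 1) / 2 with hM
        have hMn : M ≤ n := by omega
        have hmM : (m + 1) / 2 ≤ M := by omega
        set g : ℕ → ℝ := fun k => Frec f c (min k M) (i + 1) with hg
        have hcong1 : Frec f c (n + 1) i = S (f i) (c i) g M := by
          rw [Frec_succ]
          exact S_congr fun k hk => by rw [hg]; simp [Nat.min_eq_left (show k ≤ M from hk)]
        have hcong2 : Frec f c (m + 1) i = S (f i) (c i) g ((m + 1) / 2) := by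
          rw [Frec_succ]
          refine S_congr fun k hk => by rw [hg]; simp [Nat.min_eq_left (hk.trans hmM)]
        have hg0 : ∀ k, 0 ≤ g k := fun k => (key _ _).1
        have hga : ∀ k, g (k + 1) ≤ g k := by
          intro k
          rw [hg]
          exact ih (min (k + 1) M) (by omega) (i + 1) (min k M)
            (by omega)
        rw [hcong1, hcong2]
        exact S_anti (hf i) (hc i) (hfc i) hg0 hga hmM
  intro m n i h
  exact anti n i m h
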